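/- Let F be an anonymous voting method. For any majoritarian (resp. homogeneously pairwise) universal axiom Ax: if F satisfies Ax, then the majoritarian projection F_{maj,Y} (resp. the pairwise projection F_{pair,Y,m}) satisfies Ax, for any finite Y ⊆ 𝒳 and m ∈ ℤ⁺. -/

import Mathlib

/- Formalization of the profile representation of (weighted) weak tournaments from
Holliday, Norman, Pacuit, Zahedian, "Impossibility theorems involving weakenings of
expansion consistency and resoluteness in voting". Candidates form an infinite
type `C`. -/

open Classical

noncomputable section

/-- `L` is a strict linear order on exactly the finite set `s`. -/
def IsStrictLinearOrderOn {C : Type} (s : Finset C) (L : C → C → Prop) : Prop :=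
  (∀ x, ¬ L x x) ∧ (∀ x y z, L x y → L y z → L x z) ∧
    (∀ x ∈ s, ∀ y ∈ s, x ≠ y → L x y ∨ L y x) ∧ ∀ x y, L x y → x ∈ s ∧ y ∈ s

/-- Restriction of a relation to a finite set `A`. -/
def restrictRel {C : Type} (A : Finset C) (L : C → C → Prop) : C → C → Prop :=
  fun x y => L x y ∧ x ∈ A ∧ y ∈ A

theorem IsStrictLinearOrderOn.restrict {C : Type} {s A : Finset C} {L : C → C → Prop}
    (h : IsStrictLinearOrderOn s L) (hA : A ⊆ s) :
    IsStrictLinearOrderOn A (restrictRel A L) := by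
  obtain ⟨hirr, htr, htot, hdom⟩ := h
  refine ⟨fun x hx => hirr x hx.1,
    fun x y z hxy hyz => ⟨htr _ _ _ hxy.1 hyz.1, hxy.2.1, hyz.2.2⟩, ?_,
    fun x y hxy => ⟨hxy.2.1, hxy.2.2⟩⟩
  intro x hx y hy hne
  rcases htot x (hA hx) y (hA hy) hne with h' | h'
  · exact Or.inl ⟨h', hx, hy⟩
  · exact Or.inr ⟨h', hy, hx⟩

/-- The image of a relation under the transposition of `a` and `b`:
`(x, y) ∈ swapRel a b L` iff `(π x, π y) ∈ L` where `π` swaps `a` and `b`. -/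
def swapRel {C : Type} (a b : C) (L : C → C → Prop) : C → C → Prop :=
  fun x y => L (Equiv.swap a b x) (Equiv.swap a b y)

theorem IsStrictLinearOrderOn.swapRel_mem {C : Type} {s : Finset C} {L : C → C → Prop}
    (a b : C) (h : IsStrictLinearOrderOn s L) :
    IsStrictLinearOrderOn (s.image (Equiv.swap a b)) (swapRel a b L) := by
  obtain ⟨hirr, htr, htot, hdom⟩ := h
  refine ⟨fun x => hirr _, fun x y z hxy hyz => htr _ _ _ hxy hyz, ?_, ?_⟩
  · intro x hx y hy hne
    obtain ⟨x', hx', rfl⟩ := Finset.mem_image.mp hx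
    obtain ⟨y', hy', rfl⟩ := Finset.mem_image.mp hy
    have hne' : x' ≠ y' := by rintro rfl; exact hne rfl
    have := htot x' hx' y' hy' hne'
    simpa [swapRel, Equiv.swap_apply_self] using this
  · intro x y hxy
    obtain ⟨h1, h2⟩ := hdom _ _ hxy
    exact ⟨Finset.mem_image.mpr ⟨_, h1, Equiv.swap_apply_self a b x⟩,
      Finset.mem_image.mpr ⟨_, h2, Equiv.swap_apply_self a b y⟩⟩

theorem IsStrictLinearOrderOn.of_swapRel {C : Type} {s : Finset C} {L : C → C → Prop}
    {a b : C} (h : IsStrictLinearOrderOn s (swapRel a b L)) :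
    IsStrictLinearOrderOn (s.image (Equiv.swap a b)) L := by
  have h2 := h.swapRel_mem a b
  have heq : swapRel a b (swapRel a b L) = L := by
    funext x y
    simp [swapRel, Equiv.swap_apply_self]
  rwa [heq] at h2

/-- A generalized anonymous profile: an integer-valued function on the strict linear
orders of a finite nonempty set of candidates (encoded as a function on all
relations, supported on the strict linear orders of `cands`). -/
structure GAProfile (C : Type) where
  cands : Finset C
  cands_nonempty : cands.Nonempty
  count : (C → C → Prop) → ℤ
  count_supp : ∀ L, count L ≠ 0 → IsStrictLinearOrderOn cands L

namespace GAProfile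

variable {C : Type}

/-- `P` is an anonymous profile: all ballot counts are nonnegative. -/
def IsAnon (P : GAProfile C) : Prop := ∀ L, 0 ≤ P.count L

/-- The margin `μ_{x,y}(P)` of `x` over `y` in `P`. -/
def margin (P : GAProfile C) (x y : C) : ℤ :=
  (∑ᶠ L : C → C → Prop, if L x y then P.count L else 0) -
    ∑ᶠ L : C → C → Prop, if L y x then P.count L else 0

theorem margin_neg (P : GAProfile C) (x y : C) : P.margin y x = - P.margin x y := by
  simp only [margin]
  ring

/-- The restriction `P|_Z` of a generalized anonymous profile to a nonempty subset
`Z` of its candidates. -/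
def restrict (P : GAProfile C) (Z : Finset C) (hZ : Z.Nonempty) (hsub : Z ⊆ P.cands) :
    GAProfile C where
  cands := Z
  cands_nonempty := hZ
  count := fun L => ∑ᶠ L' : C → C → Prop, if restrictRel Z L' = L then P.count L' else 0
  count_supp := by
    intro L hL
    by_contra hnot
    apply hL
    apply finsum_eq_zero_of_forall_eq_zero
    intro L'
    split_ifs with h
    · by_contra hc
      exact hnot (h ▸ ((P.count_supp L' hc).restrict hsub))
    · rfl

/-- The profile `P_{a⇄b}` obtained by transposing the candidates `a` and `b`. -/
def swapCands (P : GAProfile C) (a b : C) : GAProfile C where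
  cands := P.cands.image (Equiv.swap a b)
  cands_nonempty := P.cands_nonempty.image _
  count := fun L => P.count (swapRel a b L)
  count_supp := fun L h => (P.count_supp _ h).of_swapRel

end GAProfile

/-- A weak tournament: an asymmetric directed graph on a finite nonempty set of
vertices. -/
structure WeakTournament (C : Type) where
  verts : Finset C
  verts_nonempty : verts.Nonempty
  edge : C → C → Prop
  edge_asymm : ∀ x y, edge x y → ¬ edge y x
  edge_dom : ∀ x y, edge x y → x ∈ verts ∧ y ∈ verts

/-- A weighted weak tournament: a weak tournament together with a positive integer
weight on each edge (normalized to weight `0` off the edges). -/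
structure WeightedWeakTournament (C : Type) where
  verts : Finset C
  verts_nonempty : verts.Nonempty
  edge : C → C → Prop
  edge_asymm : ∀ x y, edge x y → ¬ edge y x
  edge_dom : ∀ x y, edge x y → x ∈ verts ∧ y ∈ verts
  wt : C → C → ℤ
  wt_pos : ∀ x y, edge x y → 0 < wt x y
  wt_eq_zero : ∀ x y, ¬ edge x y → wt x y = 0

namespace GAProfile

variable {C : Type}

/-- The majority graph `M(P)` of a generalized anonymous profile. -/
def maj (P : GAProfile C) : WeakTournament C where
  verts := P.cands
  verts_nonempty := P.cands_nonempty
  edge := fun x y => 0 < P.margin x y ∧ x ∈ P.cands ∧ y ∈ P.cands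
  edge_asymm := by
    intro x y h h'
    have hneg := P.margin_neg x y
    have h1 := h.1
    have h2 := h'.1
    omega
  edge_dom := fun x y h => ⟨h.2.1, h.2.2⟩

/-- The margin graph `ℳ(P)` of a generalized anonymous profile. -/
def marg (P : GAProfile C) : WeightedWeakTournament C where
  verts := P.cands
  verts_nonempty := P.cands_nonempty
  edge := fun x y => 0 < P.margin x y ∧ x ∈ P.cands ∧ y ∈ P.cands
  edge_asymm := by
    intro x y h h'
    have hneg := P.margin_neg x y
    have h1 := h.1
    have h2 := h'.1
    omega
  edge_dom := fun x y h => ⟨h.2.1, h.2.2⟩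
  wt := fun x y =>
    if 0 < P.margin x y ∧ x ∈ P.cands ∧ y ∈ P.cands then P.margin x y else 0
  wt_pos := by
    intro x y h
    show 0 < if 0 < P.margin x y ∧ x ∈ P.cands ∧ y ∈ P.cands then P.margin x y else 0
    rw [if_pos h]
    exact h.1
  wt_eq_zero := by
    intro x y h
    show (if 0 < P.margin x y ∧ x ∈ P.cands ∧ y ∈ P.cands then P.margin x y else 0) = 0
    exact if_neg h

end GAProfile

/-- The number `ψ_Y = 2 (|Y| − 2)!`. -/
def psi {C : Type} (Y : Finset C) : ℤ := 2 * ((Y.card - 2).factorial : ℤ)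

theorem psi_pos {C : Type} (Y : Finset C) : 0 < psi Y := by
  have h := Nat.factorial_pos (Y.card - 2)
  simp only [psi]
  omega

/-- The count function of the profile `𝐋_Y` consisting of one copy of each linear
order of `Y`. -/
def allOrdersCount {C : Type} (Y : Finset C) (L : C → C → Prop) : ℤ :=
  if IsStrictLinearOrderOn Y L then 1 else 0

/-- `L` ranks `a` first and `b` second among the candidates in `Y`. -/
def firstSecond {C : Type} (Y : Finset C) (a b : C) (L : C → C → Prop) : Prop :=
  (∀ z ∈ Y, z ≠ a → L a z) ∧ ∀ z ∈ Y, z ≠ a → z ≠ b → L b z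

/-- The count function of the `ab`-`Y`-block `𝐋_{ab-Y}`: one copy of each linear
order of `Y` with `a` first and `b` second. -/
def blockCount {C : Type} (Y : Finset C) (a b : C) (L : C → C → Prop) : ℤ :=
  if IsStrictLinearOrderOn Y L ∧ firstSecond Y a b L then 1 else 0

/-- The count function of the profile
`𝔏_Y(T) = 𝐋_Y + Σ_{a→b in T} (𝐋_{ab-Y} − 𝐋_{ba-Y})`. -/
def bigLCount {C : Type} (Y : Finset C) (T : WeakTournament C) : (C → C → Prop) → ℤ :=
  fun L => allOrdersCount Y L +
    ∑ p ∈ T.verts ×ˢ T.verts,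
      (if T.edge p.1 p.2 then blockCount Y p.1 p.2 L - blockCount Y p.2 p.1 L else 0)

/-- The profile `𝔏_Y(T)`. -/
def bigL {C : Type} (Y : Finset C) (T : WeakTournament C) (hsub : T.verts ⊆ Y) :
    GAProfile C where
  cands := Y
  cands_nonempty := by
    obtain ⟨x, hx⟩ := T.verts_nonempty
    exact ⟨x, hsub hx⟩
  count := bigLCount Y T
  count_supp := by
    intro L hL
    by_contra h
    apply hL
    have hb : ∀ a b : C, blockCount Y a b L = 0 := by
      intro a b
      exact if_neg (by exact fun hc => h hc.1)
    simp only [bigLCount, allOrdersCount, if_neg h, zero_add]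
    refine Finset.sum_eq_zero fun p _ => ?_
    rw [hb, hb, sub_self]
    split <;> rfl

/-- The profile representation `𝔓_Y(T) = 𝔏_Y(T)|_{X(T)}` of a weak tournament `T`
relative to `Y`. -/
def profileRep {C : Type} (Y : Finset C) (T : WeakTournament C) (hsub : T.verts ⊆ Y) :
    GAProfile C :=
  (bigL Y T hsub).restrict T.verts T.verts_nonempty hsub

/-- The count function of the profile
`𝔏_{Y,m}(𝒯) = m𝐋_Y + Σ_{a→b in 𝒯 with weight kψ_Y} (k𝐋_{ab-Y} − k𝐋_{ba-Y})`. -/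
def bigLWCount {C : Type} (Y : Finset C) (m : ℕ) (T : WeightedWeakTournament C) :
    (C → C → Prop) → ℤ :=
  fun L => (m : ℤ) * allOrdersCount Y L +
    ∑ p ∈ T.verts ×ˢ T.verts,
      (if T.edge p.1 p.2 then
        (T.wt p.1 p.2 / psi Y) * (blockCount Y p.1 p.2 L - blockCount Y p.2 p.1 L)
      else 0)

/-- The profile `𝔏_{Y,m}(𝒯)`. -/
def bigLW {C : Type} (Y : Finset C) (m : ℕ) (T : WeightedWeakTournament C)
    (hsub : T.verts ⊆ Y) : GAProfile C where
  cands := Y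
  cands_nonempty := by
    obtain ⟨x, hx⟩ := T.verts_nonempty
    exact ⟨x, hsub hx⟩
  count := bigLWCount Y m T
  count_supp := by
    intro L hL
    by_contra h
    apply hL
    have hb : ∀ a b : C, blockCount Y a b L = 0 := by
      intro a b
      exact if_neg (by exact fun hc => h hc.1)
    simp only [bigLWCount, allOrdersCount, if_neg h, mul_zero, zero_add]
    refine Finset.sum_eq_zero fun p _ => ?_
    rw [hb, hb, sub_self, mul_zero]
    split <;> rfl

/-- The profile representation `𝔓_{Y,m}(𝒯) = 𝔏_{Y,m}(𝒯)|_{X(𝒯)}` of a weighted weak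
tournament `𝒯` relative to `Y` and `m`. -/
def profileRepW {C : Type} (Y : Finset C) (m : ℕ) (T : WeightedWeakTournament C)
    (hsub : T.verts ⊆ Y) : GAProfile C :=
  (bigLW Y m T hsub).restrict T.verts T.verts_nonempty hsub

/-- Membership in `𝕎𝕋^w_{Y,m}`: a weighted weak tournament on vertices included in
`Y`, each of whose weights is `kψ_Y` for some positive `k ≤ m`. -/
def MemWTw {C : Type} (Y : Finset C) (m : ℕ) (T : WeightedWeakTournament C) : Prop :=
  T.verts ⊆ Y ∧
    ∀ a b, T.edge a b → ∃ k : ℕ, 0 < k ∧ k ≤ m ∧ T.wt a b = (k : ℤ) * psi Y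

/-- The weighted weak tournament obtained by multiplying all weights by `n > 0`. -/
def WeightedWeakTournament.scale {C : Type} (n : ℤ) (hn : 0 < n)
    (T : WeightedWeakTournament C) : WeightedWeakTournament C where
  verts := T.verts
  verts_nonempty := T.verts_nonempty
  edge := T.edge
  edge_asymm := T.edge_asymm
  edge_dom := T.edge_dom
  wt := fun x y => n * T.wt x y
  wt_pos := fun x y h => mul_pos hn (T.wt_pos x y h)
  wt_eq_zero := fun x y h => by
    show n * T.wt x y = 0
    rw [T.wt_eq_zero x y h, mul_zero]

/-- An anonymous voting method: a function on a set of anonymous profiles assigning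
to each profile in its domain a nonempty set of winners among its candidates. -/
structure AnonVotingMethod (C : Type) where
  dom : Set (GAProfile C)
  dom_anon : ∀ P ∈ dom, P.IsAnon
  winners : GAProfile C → Finset C
  winners_nonempty : ∀ P ∈ dom, (winners P).Nonempty
  winners_sub : ∀ P ∈ dom, winners P ⊆ P.cands

namespace AnonVotingMethod

variable {C : Type}

/-- Majoritarianism: the winners depend only on the majority graph. -/
def Majoritarian (F : AnonVotingMethod C) : Prop :=
  ∀ P ∈ F.dom, ∀ P' ∈ F.dom, P.maj = P'.maj → F.winners P = F.winners P'

/-- Pairwiseness: the winners depend only on the margin graph. -/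
def Pairwise (F : AnonVotingMethod C) : Prop :=
  ∀ P ∈ F.dom, ∀ P' ∈ F.dom, P.marg = P'.marg → F.winners P = F.winners P'

/-- Neutrality: transposing two candidates transposes the winners accordingly. -/
def Neutral (F : AnonVotingMethod C) : Prop :=
  ∀ P ∈ F.dom, ∀ a b : C, P.swapCands a b ∈ F.dom →
    F.winners (P.swapCands a b) = (F.winners P).image (Equiv.swap a b)

end AnonVotingMethod

/-- The majoritarian projection `F_{maj,Y}` of an anonymous voting method `F`:
its domain consists of the anonymous profiles `P` with `X(P) ⊆ Y` and
`𝔓_Y(M(P)) ∈ dom(F)`, and `F_{maj,Y}(P) = F(𝔓_Y(M(P)))`. -/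
def majProj {C : Type} (F : AnonVotingMethod C) (Y : Finset C) : AnonVotingMethod C where
  dom := {P | P.IsAnon ∧ ∃ h : P.maj.verts ⊆ Y, profileRep Y P.maj h ∈ F.dom}
  dom_anon := fun _ hP => hP.1
  winners := fun P =>
    if h : P.maj.verts ⊆ Y then F.winners (profileRep Y P.maj h) else P.cands
  winners_nonempty := by
    rintro P ⟨hA, h, hd⟩
    show (if h : P.maj.verts ⊆ Y then
      F.winners (profileRep Y P.maj h) else P.cands).Nonempty
    rw [dif_pos h]
    exact F.winners_nonempty _ hd
  winners_sub := by
    rintro P ⟨hA, h, hd⟩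
    show (if h : P.maj.verts ⊆ Y then
      F.winners (profileRep Y P.maj h) else P.cands) ⊆ P.cands
    rw [dif_pos h]
    exact F.winners_sub _ hd

/-- The pairwise projection `F_{pair,Y,m}` of an anonymous voting method `F`:
its domain consists of the anonymous profiles `P` with `X(P) ⊆ Y`, all weights in
`ℳ(P)` at most `m`, and `𝔓_{Y,m}(ψℳ(P)) ∈ dom(F)`, and
`F_{pair,Y,m}(P) = F(𝔓_{Y,m}(ψℳ(P)))`. -/
def pairProj {C : Type} (F : AnonVotingMethod C) (Y : Finset C) (m : ℕ) :
    AnonVotingMethod C where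
  dom := {P | P.IsAnon ∧ (∀ x ∈ P.cands, ∀ y ∈ P.cands, P.margin x y ≤ (m : ℤ)) ∧
    ∃ h : (WeightedWeakTournament.scale (psi Y) (psi_pos Y) P.marg).verts ⊆ Y,
      profileRepW Y m (WeightedWeakTournament.scale (psi Y) (psi_pos Y) P.marg) h ∈ F.dom}
  dom_anon := fun _ hP => hP.1
  winners := fun P =>
    if h : (WeightedWeakTournament.scale (psi Y) (psi_pos Y) P.marg).verts ⊆ Y then
      F.winners
        (profileRepW Y m (WeightedWeakTournament.scale (psi Y) (psi_pos Y) P.marg) h)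
    else P.cands
  winners_nonempty := by
    rintro P ⟨hA, hw, h, hd⟩
    show (if h : (WeightedWeakTournament.scale (psi Y) (psi_pos Y) P.marg).verts ⊆ Y then
      F.winners
        (profileRepW Y m (WeightedWeakTournament.scale (psi Y) (psi_pos Y) P.marg) h)
      else P.cands).Nonempty
    rw [dif_pos h]
    exact F.winners_nonempty _ hd
  winners_sub := by
    rintro P ⟨hA, hw, h, hd⟩
    show (if h : (WeightedWeakTournament.scale (psi Y) (psi_pos Y) P.marg).verts ⊆ Y then
      F.winners
        (profileRepW Y m (WeightedWeakTournament.scale (psi Y) (psi_pos Y) P.marg) h)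
      else P.cands) ⊆ P.cands
    rw [dif_pos h]
    exact F.winners_sub _ hd

/-- `F` satisfies the `n`-ary universal axiom `Ax`: every `n`-tuple of pairs
`⟨P, F(P)⟩` with `P` in the domain of `F` belongs to `Ax`. -/
def AnonVotingMethod.Satisfies {C : Type} (F : AnonVotingMethod C) {n : ℕ}
    (Ax : Set (Fin n → GAProfile C × Finset C)) : Prop :=
  ∀ f : Fin n → GAProfile C × Finset C,
    (∀ i, (f i).1 ∈ F.dom ∧ (f i).2 = F.winners (f i).1) → f ∈ Ax

/-- `Ax` is a majoritarian universal axiom: membership is invariant under replacing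
the profiles by profiles with the same majority graphs. -/
def IsMajoritarianAx {C : Type} {n : ℕ} (Ax : Set (Fin n → GAProfile C × Finset C)) :
    Prop :=
  ∀ Pv Qv : Fin n → GAProfile C, (∀ i, (Pv i).maj = (Qv i).maj) →
    ∀ Xv : Fin n → Finset C, (∀ i, Xv i ⊆ (Pv i).cands) →
      ((fun i => (Pv i, Xv i)) ∈ Ax ↔ (fun i => (Qv i, Xv i)) ∈ Ax)

/-- `Ax` is a homogeneously pairwise universal axiom: membership is invariant under
replacing the profiles by profiles whose margin graphs are a common positive multiple
of the original margin graphs. -/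
def IsHomogeneouslyPairwiseAx {C : Type} {n : ℕ}
    (Ax : Set (Fin n → GAProfile C × Finset C)) : Prop :=
  ∀ Pv Qv : Fin n → GAProfile C, ∀ k : ℤ, ∀ hk : 0 < k,
    (∀ i, WeightedWeakTournament.scale k hk (Pv i).marg = (Qv i).marg) →
    ∀ Xv : Fin n → Finset C, (∀ i, Xv i ⊆ (Pv i).cands) →
      ((fun i => (Pv i, Xv i)) ∈ Ax ↔ (fun i => (Qv i, Xv i)) ∈ Ax)

/-- `Ax` is a variable candidate universal axiom: if the `Qᵢ` have the same candidate
sets as the `Pᵢ` and are related by restriction in all the ways the `Pᵢ` are, then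
acceptable choices for the `Qᵢ` are acceptable choices for the `Pᵢ`. -/
def IsVariableCandidateAx {C : Type} {n : ℕ}
    (Ax : Set (Fin n → GAProfile C × Finset C)) : Prop :=
  ∀ Pv Qv : Fin n → GAProfile C,
    (∀ i, (Pv i).cands = (Qv i).cands) →
    (∀ i j, ∀ h1 : (Pv i).cands ⊆ (Pv j).cands,
      Pv i = (Pv j).restrict (Pv i).cands (Pv i).cands_nonempty h1 →
      ∀ h2 : (Qv i).cands ⊆ (Qv j).cands,
        Qv i = (Qv j).restrict (Qv i).cands (Qv i).cands_nonempty h2) →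
    ∀ Xv : Fin n → Finset C, (∀ i, Xv i ⊆ (Pv i).cands) →
      (fun i => (Qv i, Xv i)) ∈ Ax → (fun i => (Pv i, Xv i)) ∈ Ax

section Aux18
variable {C : Type}

theorem ite_inst {α : Sort _} {p : Prop} (h1 h2 : Decidable p) (a b : α) :
    @ite _ p h1 a b = @ite _ p h2 a b := by
  rw [Subsingleton.elim h1 h2]

theorem slo_asymm {s : Finset C} {L : C → C → Prop} (h : IsStrictLinearOrderOn s L)
    {x y : C} (hxy : L x y) : ¬ L y x := fun hyx => h.1 x (h.2.1 _ _ _ hxy hyx)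

theorem slo_finite (Y : Finset C) :
    {L : C → C → Prop | IsStrictLinearOrderOn Y L}.Finite := by
  have hinj : Set.InjOn (fun (L : C → C → Prop) => (fun a b : ↥Y => L a b))
      {L | IsStrictLinearOrderOn Y L} := by
    intro L1 h1 L2 h2 heq
    funext x y
    apply propext
    constructor
    · intro hL
      obtain ⟨hx, hy⟩ := h1.2.2.2 _ _ hL
      have := congrFun (congrFun heq ⟨x, hx⟩) ⟨y, hy⟩
      dsimp at this
      exact this ▸ hL
    · intro hL
      obtain ⟨hx, hy⟩ := h2.2.2.2 _ _ hL
      have := congrFun (congrFun heq ⟨x, hx⟩) ⟨y, hy⟩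
      dsimp at this
      exact this.symm ▸ hL
  exact Set.Finite.of_finite_image (Set.toFinite _) hinj

/-- The finset of strict linear orders on `Y`. -/
noncomputable def SY (Y : Finset C) : Finset (C → C → Prop) := (slo_finite Y).toFinset

theorem mem_SY {Y : Finset C} {L : C → C → Prop} :
    L ∈ SY Y ↔ IsStrictLinearOrderOn Y L := Set.Finite.mem_toFinset _

/-- Half of a margin: the number of ballots ranking `x` above `y`. -/
noncomputable def half (Y : Finset C) (c : (C → C → Prop) → ℤ) (x y : C) : ℤ :=
  ∑ L ∈ SY Y, if L x y then c L else 0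

theorem finsum_half {Y : Finset C} {c : (C → C → Prop) → ℤ}
    (h : ∀ L, c L ≠ 0 → IsStrictLinearOrderOn Y L) (x y : C) :
    (∑ᶠ L, if L x y then c L else 0) = half Y c x y := by
  apply finsum_eq_sum_of_support_subset
  intro L hL
  simp only [Function.mem_support] at hL
  have hc : c L ≠ 0 := by intro h0; apply hL; simp [h0]
  exact Finset.mem_coe.mpr (mem_SY.mpr (h L hc))

theorem margin_half (P : GAProfile C) (x y : C) :
    P.margin x y = half P.cands P.count x y - half P.cands P.count y x := by
  unfold GAProfile.margin
  rw [finsum_half P.count_supp, finsum_half P.count_supp]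

theorem margin_self (P : GAProfile C) (x : C) : P.margin x x = 0 := by
  have := P.margin_neg x x
  omega

theorem swap_mem_iff {Y : Finset C} {a b : C} (ha : a ∈ Y) (hb : b ∈ Y) (z : C) :
    Equiv.swap a b z ∈ Y ↔ z ∈ Y := by
  rcases eq_or_ne z a with rfl | hza
  · simp [Equiv.swap_apply_left, ha, hb]
  rcases eq_or_ne z b with rfl | hzb
  · simp [Equiv.swap_apply_right, ha, hb]
  · rw [Equiv.swap_apply_of_ne_of_ne hza hzb]

theorem image_swap {Y : Finset C} {a b : C} (ha : a ∈ Y) (hb : b ∈ Y) :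
    Y.image (Equiv.swap a b) = Y := by
  ext z
  simp only [Finset.mem_image]
  constructor
  · rintro ⟨w, hw, rfl⟩
    exact (swap_mem_iff ha hb w).mpr hw
  · intro hz
    exact ⟨Equiv.swap a b z, (swap_mem_iff ha hb z).mpr hz, Equiv.swap_apply_self a b z⟩

theorem swapRel_invol {a b : C} (L : C → C → Prop) : swapRel a b (swapRel a b L) = L := by
  funext x y; simp [swapRel, Equiv.swap_apply_self]

theorem slo_swapRel_iff {Y : Finset C} {a b : C} (ha : a ∈ Y) (hb : b ∈ Y)
    (L : C → C → Prop) :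
    IsStrictLinearOrderOn Y (swapRel a b L) ↔ IsStrictLinearOrderOn Y L := by
  constructor
  · intro h
    have h2 := h.of_swapRel
    rwa [image_swap ha hb] at h2
  · intro h
    have h2 := h.swapRel_mem a b
    rwa [image_swap ha hb] at h2

theorem sum_swapRel {Y : Finset C} {a b : C} (ha : a ∈ Y) (hb : b ∈ Y)
    (g : (C → C → Prop) → ℤ) :
    ∑ L ∈ SY Y, g (swapRel a b L) = ∑ L ∈ SY Y, g L := by
  refine Finset.sum_nbij' (fun L => swapRel a b L) (fun L => swapRel a b L) ?_ ?_ ?_ ?_ ?_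
  · intro L hL; exact mem_SY.mpr ((slo_swapRel_iff ha hb L).mpr (mem_SY.mp hL))
  · intro L hL; exact mem_SY.mpr ((slo_swapRel_iff ha hb L).mpr (mem_SY.mp hL))
  · intro L _; exact swapRel_invol L
  · intro L _; exact swapRel_invol L
  · intro L _; rfl

end Aux18
section Aux18b
variable {C : Type}

/-- Total number of ballots in the `ab`-`Y` block. -/
noncomputable def Nblk (Y : Finset C) (a b : C) : ℤ := ∑ L ∈ SY Y, blockCount Y a b L

theorem half_block_top {Y : Finset C} {a b z : C} (hz : z ∈ Y) (hza : z ≠ a) :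
    half Y (blockCount Y a b) a z = Nblk Y a b := by
  apply Finset.sum_congr rfl
  intro L _
  by_cases hB : IsStrictLinearOrderOn Y L ∧ firstSecond Y a b L
  · rw [if_pos (hB.2.1 z hz hza)]
  · have h0 : blockCount Y a b L = 0 := if_neg hB
    simp [h0]

theorem half_block_top' {Y : Finset C} {a b z : C} (hz : z ∈ Y) (hza : z ≠ a) :
    half Y (blockCount Y a b) z a = 0 := by
  apply Finset.sum_eq_zero
  intro L _
  by_cases hB : IsStrictLinearOrderOn Y L ∧ firstSecond Y a b L
  · exact if_neg (slo_asymm hB.1 (hB.2.1 z hz hza))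
  · have h0 : blockCount Y a b L = 0 := if_neg hB
    simp [h0]

theorem half_block_snd {Y : Finset C} {a b z : C} (hz : z ∈ Y) (hza : z ≠ a) (hzb : z ≠ b) :
    half Y (blockCount Y a b) b z = Nblk Y a b := by
  apply Finset.sum_congr rfl
  intro L _
  by_cases hB : IsStrictLinearOrderOn Y L ∧ firstSecond Y a b L
  · rw [if_pos (hB.2.2 z hz hza hzb)]
  · have h0 : blockCount Y a b L = 0 := if_neg hB
    simp [h0]

theorem half_block_snd' {Y : Finset C} {a b z : C} (hz : z ∈ Y) (hza : z ≠ a) (hzb : z ≠ b) :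
    half Y (blockCount Y a b) z b = 0 := by
  apply Finset.sum_eq_zero
  intro L _
  by_cases hB : IsStrictLinearOrderOn Y L ∧ firstSecond Y a b L
  · exact if_neg (slo_asymm hB.1 (hB.2.2 z hz hza hzb))
  · have h0 : blockCount Y a b L = 0 := if_neg hB
    simp [h0]

theorem blockCount_swapRel {Y : Finset C} {a b : C} (ha : a ∈ Y) (hb : b ∈ Y) (hab : a ≠ b)
    (L : C → C → Prop) :
    blockCount Y a b (swapRel a b L) = blockCount Y b a L := by
  have hσa : Equiv.swap a b a = b := Equiv.swap_apply_left a b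
  have hσb : Equiv.swap a b b = a := Equiv.swap_apply_right a b
  unfold blockCount
  apply if_congr _ rfl rfl
  rw [slo_swapRel_iff ha hb]
  apply and_congr_right
  intro _
  constructor
  · rintro ⟨h1, h2⟩
    constructor
    · intro z hzY hzb
      by_cases hza : z = a
      · have := h1 b hb (Ne.symm hab)
        rw [hza]
        rwa [show swapRel a b L a b = L b a by simp [swapRel, hσa, hσb]] at this
      · have := h1 z hzY hza
        show L b z
        rwa [show swapRel a b L a z = L b z by
          simp [swapRel, hσa, Equiv.swap_apply_of_ne_of_ne hza hzb]] at this
    · intro z hzY hzb hza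
      have := h2 z hzY hza hzb
      show L a z
      rwa [show swapRel a b L b z = L a z by
        simp [swapRel, hσb, Equiv.swap_apply_of_ne_of_ne hza hzb]] at this
  · rintro ⟨h1, h2⟩
    constructor
    · intro z hzY hza
      show L (Equiv.swap a b a) (Equiv.swap a b z)
      rw [hσa]
      rcases eq_or_ne z b with rfl | hzb
      · rw [hσb]; exact h1 a ha hab
      · rw [Equiv.swap_apply_of_ne_of_ne hza hzb]; exact h1 z hzY hzb
    · intro z hzY hza hzb
      show L (Equiv.swap a b b) (Equiv.swap a b z)
      rw [hσb, Equiv.swap_apply_of_ne_of_ne hza hzb]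
      exact h2 z hzY hzb hza

theorem Nblk_comm {Y : Finset C} {a b : C} (ha : a ∈ Y) (hb : b ∈ Y) (hab : a ≠ b) :
    Nblk Y a b = Nblk Y b a := by
  rw [Nblk, ← sum_swapRel ha hb (blockCount Y a b)]
  apply Finset.sum_congr rfl
  intro L _
  rw [blockCount_swapRel ha hb hab]

theorem half_block_far {Y : Finset C} {a b x y : C} (ha : a ∈ Y) (hb : b ∈ Y) (hab : a ≠ b)
    (hxa : x ≠ a) (hxb : x ≠ b) (hya : y ≠ a) (hyb : y ≠ b) :
    half Y (blockCount Y a b) x y = half Y (blockCount Y b a) x y := by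
  rw [half, ← sum_swapRel ha hb (fun L => if L x y then blockCount Y a b L else 0)]
  apply Finset.sum_congr rfl
  intro L _
  rw [show blockCount Y a b (swapRel a b L) = blockCount Y b a L from
    blockCount_swapRel ha hb hab L]
  apply if_congr _ rfl rfl
  show L (Equiv.swap a b x) (Equiv.swap a b y) ↔ L x y
  rw [Equiv.swap_apply_of_ne_of_ne hxa hxb, Equiv.swap_apply_of_ne_of_ne hya hyb]

theorem half_all_symm {Y : Finset C} {x y : C} (hx : x ∈ Y) (hy : y ∈ Y) :
    half Y (allOrdersCount Y) x y = half Y (allOrdersCount Y) y x := by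
  show (∑ L ∈ SY Y, if L x y then allOrdersCount Y L else 0)
      = ∑ L ∈ SY Y, if L y x then allOrdersCount Y L else 0
  rw [← sum_swapRel hx hy (fun L => if L y x then allOrdersCount Y L else 0)]
  apply Finset.sum_congr rfl
  intro L _
  rw [show allOrdersCount Y (swapRel x y L) = allOrdersCount Y L from
    if_congr (slo_swapRel_iff hx hy L) rfl rfl]
  apply if_congr _ rfl rfl
  show L x y ↔ L (Equiv.swap x y y) (Equiv.swap x y x)
  rw [Equiv.swap_apply_left, Equiv.swap_apply_right]

theorem half_add {Y : Finset C} (c1 c2 : (C → C → Prop) → ℤ) (x y : C) :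
    half Y (fun L => c1 L + c2 L) x y = half Y c1 x y + half Y c2 x y := by
  unfold half
  rw [← Finset.sum_add_distrib]
  apply Finset.sum_congr rfl
  intro L _
  split_ifs <;> simp

theorem halfW_sub {Y : Finset C} (c1 c2 : (C → C → Prop) → ℤ) (x y : C) :
    half Y (fun L => c1 L - c2 L) x y = half Y c1 x y - half Y c2 x y := by
  unfold half
  rw [← Finset.sum_sub_distrib]
  apply Finset.sum_congr rfl
  intro L _
  split_ifs <;> simp

theorem half_smul {Y : Finset C} (k : ℤ) (c : (C → C → Prop) → ℤ) (x y : C) :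
    half Y (fun L => k * c L) x y = k * half Y c x y := by
  unfold half
  rw [Finset.mul_sum]
  apply Finset.sum_congr rfl
  intro L _
  split_ifs <;> simp

theorem half_sum {ι : Type} {Y : Finset C} (s : Finset ι) (d : ι → (C → C → Prop) → ℤ)
    (x y : C) :
    half Y (fun L => ∑ p ∈ s, d p L) x y = ∑ p ∈ s, half Y (d p) x y := by
  unfold half
  have h1 : ∀ L ∈ SY Y, (if L x y then ∑ p ∈ s, d p L else 0)
      = ∑ p ∈ s, (if L x y then d p L else 0) := by
    intro L _
    split_ifs with h
    · rfl
    · simp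

  rw [Finset.sum_congr rfl h1, Finset.sum_comm]

end Aux18b
section Aux18c
variable {C : Type}

/-- `t` is on top of `s` according to `L`. -/
def topIn (s : Finset C) (t : C) (L : C → C → Prop) : Prop := ∀ z ∈ s, z ≠ t → L t z

/-- Number of strict linear orders on `s` satisfying `Q`. -/
noncomputable def cnt (s : Finset C) (Q : (C → C → Prop) → Prop) : ℤ :=
  ∑ L ∈ SY s, if Q L then 1 else 0

theorem cnt_congr {s : Finset C} {Q Q' : (C → C → Prop) → Prop}
    (h : ∀ L, IsStrictLinearOrderOn s L → (Q L ↔ Q' L)) : cnt s Q = cnt s Q' := by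
  apply Finset.sum_congr rfl
  intro L hL
  exact if_congr (h L (mem_SY.mp hL)) rfl rfl

/-- Extend an order on `s.erase t` by putting `t` on top. -/
def extTop (s : Finset C) (t : C) (L : C → C → Prop) : C → C → Prop :=
  fun x y => (x = t ∧ y ∈ s ∧ y ≠ t) ∨ L x y

theorem extTop_slo {s : Finset C} {t : C} (ht : t ∈ s) {L : C → C → Prop}
    (hL : IsStrictLinearOrderOn (s.erase t) L) :
    IsStrictLinearOrderOn s (extTop s t L) := by
  obtain ⟨hirr, htr, htot, hdom⟩ := hL
  refine ⟨?_, ?_, ?_, ?_⟩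
  · rintro x (⟨rfl, _, hne⟩ | hx)
    · exact hne rfl
    · exact hirr x hx
  · rintro x y z (⟨rfl, hy, hyt⟩ | hxy) (⟨rfl, hz, hzt⟩ | hyz)
    · exact absurd rfl hyt
    · have hz := (hdom _ _ hyz).2
      exact Or.inl ⟨rfl, Finset.mem_of_mem_erase hz, (Finset.mem_erase.mp hz).1⟩
    · have hy := (hdom _ _ hxy).2
      exact absurd rfl (Finset.mem_erase.mp hy).1
    · exact Or.inr (htr _ _ _ hxy hyz)
  · intro x hx y hy hxy
    by_cases hxt : x = t
    · exact Or.inl (Or.inl ⟨hxt, hy, fun h => hxy (h.symm ▸ hxt ▸ rfl)⟩)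
    · by_cases hyt : y = t
      · exact Or.inr (Or.inl ⟨hyt, hx, fun h => hxy (hyt ▸ h)⟩)
      · rcases htot x (Finset.mem_erase.mpr ⟨hxt, hx⟩) y (Finset.mem_erase.mpr ⟨hyt, hy⟩)
          hxy with h | h
        · exact Or.inl (Or.inr h)
        · exact Or.inr (Or.inr h)
  · rintro x y (⟨rfl, hy, _⟩ | hxy)
    · exact ⟨ht, hy⟩
    · exact ⟨Finset.mem_of_mem_erase (hdom _ _ hxy).1,
        Finset.mem_of_mem_erase (hdom _ _ hxy).2⟩

theorem topIn_extTop (s : Finset C) (t : C) (L : C → C → Prop) :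
    topIn s t (extTop s t L) := fun z hz hzt => Or.inl ⟨rfl, hz, hzt⟩

theorem restr_extTop {s : Finset C} {t : C} {L : C → C → Prop}
    (hL : IsStrictLinearOrderOn (s.erase t) L) :
    restrictRel (s.erase t) (extTop s t L) = L := by
  funext x y
  apply propext
  constructor
  · rintro ⟨(⟨rfl, _, _⟩ | hxy), hx, hy⟩
    · exact absurd rfl (Finset.mem_erase.mp hx).1
    · exact hxy
  · intro hxy
    obtain ⟨hx, hy⟩ := hL.2.2.2 _ _ hxy
    exact ⟨Or.inr hxy, hx, hy⟩

theorem extTop_restr {s : Finset C} {t : C} {L : C → C → Prop}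
    (hL : IsStrictLinearOrderOn s L) (htop : topIn s t L) :
    extTop s t (restrictRel (s.erase t) L) = L := by
  funext x y
  apply propext
  constructor
  · rintro (⟨rfl, hy, hyt⟩ | ⟨hxy, _, _⟩)
    · exact htop y hy hyt
    · exact hxy
  · intro hxy
    obtain ⟨hx, hy⟩ := hL.2.2.2 _ _ hxy
    by_cases hxt : x = t
    · have hyt : y ≠ t := by
        intro h
        rw [h, ← hxt] at hxy
        exact hL.1 x hxy
      exact Or.inl ⟨hxt, hy, hyt⟩
    · have hyt : y ≠ t := by
        rintro rfl
        exact hL.1 x (hL.2.1 _ _ _ hxy (htop x hx hxt))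
      exact Or.inr ⟨hxy, Finset.mem_erase.mpr ⟨hxt, hx⟩, Finset.mem_erase.mpr ⟨hyt, hy⟩⟩

theorem cnt_card (s : Finset C) (Q : (C → C → Prop) → Prop) :
    cnt s Q = (((SY s).filter Q).card : ℤ) := by
  unfold cnt
  rw [Finset.sum_boole]

theorem cnt_top (s : Finset C) (t : C) (ht : t ∈ s) (Q : (C → C → Prop) → Prop) :
    cnt s (fun L => topIn s t L ∧ Q (restrictRel (s.erase t) L)) = cnt (s.erase t) Q := by
  rw [cnt_card, cnt_card]
  congr 1
  apply Finset.card_bij' (fun L _ => restrictRel (s.erase t) L) (fun L _ => extTop s t L)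
  · intro L hL
    simp only [Finset.mem_filter] at hL ⊢
    exact ⟨mem_SY.mpr ((mem_SY.mp hL.1).restrict (Finset.erase_subset t s)), hL.2.2⟩
  · intro L hL
    simp only [Finset.mem_filter] at hL ⊢
    have hslo := mem_SY.mp hL.1
    refine ⟨mem_SY.mpr (extTop_slo ht hslo), topIn_extTop s t L, ?_⟩
    rw [restr_extTop hslo]
    exact hL.2
  · intro L hL
    simp only [Finset.mem_filter] at hL
    exact extTop_restr (mem_SY.mp hL.1) hL.2.1
  · intro L hL
    simp only [Finset.mem_filter] at hL
    exact restr_extTop (mem_SY.mp hL.1)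

theorem exists_top {Y : Finset C} {L : C → C → Prop} (hL : IsStrictLinearOrderOn Y L) :
    ∀ s : Finset C, s ⊆ Y → s.Nonempty → ∃ t ∈ s, topIn s t L := by
  intro s
  induction s using Finset.induction_on with
  | empty => intro _ h; exact absurd h (by simp)
  | @insert a s' ha ih =>
    intro hsub _
    rcases s'.eq_empty_or_nonempty with rfl | hne
    · refine ⟨a, Finset.mem_insert_self _ _, ?_⟩
      intro z hz hza
      rcases Finset.mem_insert.mp hz with rfl | h
      · exact absurd rfl hza
      · exact absurd h (Finset.notMem_empty z)
    · obtain ⟨t, ht, htop⟩ := ih (fun x hx => hsub (Finset.mem_insert_of_mem hx)) hne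
      have haY : a ∈ Y := hsub (Finset.mem_insert_self _ _)
      have htY : t ∈ Y := hsub (Finset.mem_insert_of_mem ht)
      have hat : a ≠ t := fun h => ha (h ▸ ht)
      rcases hL.2.2.1 a haY t htY hat with h | h
      · refine ⟨a, Finset.mem_insert_self _ _, ?_⟩
        intro z hz hza
        rcases Finset.mem_insert.mp hz with rfl | hz'
        · exact absurd rfl hza
        rcases eq_or_ne z t with rfl | hzt
        · exact h
        · exact hL.2.1 _ _ _ h (htop z hz' hzt)
      · refine ⟨t, Finset.mem_insert_of_mem ht, ?_⟩
        intro z hz hzt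
        rcases Finset.mem_insert.mp hz with rfl | hz'
        · exact h
        · exact htop z hz' hzt

theorem cnt_true : ∀ (n : ℕ) (s : Finset C), s.card = n →
    cnt s (fun _ => True) = (n.factorial : ℤ) := by
  intro n
  induction n with
  | zero =>
    intro s hs
    rw [Finset.card_eq_zero] at hs
    subst hs
    have h1 : SY (∅ : Finset C) = {fun _ _ => False} := by
      ext L
      rw [mem_SY, Finset.mem_singleton]
      constructor
      · intro h
        funext x y
        apply propext
        simp only [iff_false]
        intro hxy
        exact absurd (h.2.2.2 x y hxy).1 (Finset.notMem_empty x)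
      · rintro rfl
        exact ⟨fun _ h => h, fun _ _ _ h => h.elim,
          fun x hx => absurd hx (Finset.notMem_empty x), fun _ _ h => h.elim⟩
    unfold cnt
    rw [h1]
    simp [Nat.factorial]
  | succ k ih =>
    intro s hs
    have hne : s.Nonempty := by rw [← Finset.card_pos, hs]; omega
    have hcover : SY s = s.biUnion (fun t => (SY s).filter (topIn s t)) := by
      ext L
      simp only [Finset.mem_biUnion, Finset.mem_filter]
      constructor
      · intro hL
        obtain ⟨t, ht, htop⟩ := exists_top (mem_SY.mp hL) s (subset_refl s) hne
        exact ⟨t, ht, hL, htop⟩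
      · rintro ⟨t, _, hL, _⟩
        exact hL
    have hdisj : ∀ t1 ∈ s, ∀ t2 ∈ s, t1 ≠ t2 →
        Disjoint ((SY s).filter (topIn s t1)) ((SY s).filter (topIn s t2)) := by
      intro t1 h1 t2 h2 h12
      rw [Finset.disjoint_left]
      intro L hL1 hL2
      simp only [Finset.mem_filter] at hL1 hL2
      exact slo_asymm (mem_SY.mp hL1.1) (hL1.2 t2 h2 (Ne.symm h12)) (hL2.2 t1 h1 h12)
    have hcnt : cnt s (fun _ => True) = ((SY s).card : ℤ) := by
      unfold cnt; simp
    rw [hcnt, hcover, Finset.card_biUnion hdisj]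
    push_cast
    have heach : ∀ t ∈ s, (((SY s).filter (topIn s t)).card : ℤ) = (k.factorial : ℤ) := by
      intro t ht
      have h1 : (((SY s).filter (topIn s t)).card : ℤ) = cnt s (topIn s t) :=
        (cnt_card s (topIn s t)).symm
      have h2 : cnt s (topIn s t)
          = cnt s (fun L => topIn s t L ∧ (fun _ => True) (restrictRel (s.erase t) L)) :=
        cnt_congr (fun L _ => by simp)
      rw [h1, h2, cnt_top s t ht (fun _ => True),
        ih (s.erase t) (by rw [Finset.card_erase_of_mem ht, hs]; rfl)]
    rw [Finset.sum_congr rfl heach, Finset.sum_const, hs, Nat.factorial_succ]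
    push_cast
    ring

theorem Nblk_eq {Y : Finset C} {a b : C} (ha : a ∈ Y) (hb : b ∈ Y) (hab : a ≠ b) :
    Nblk Y a b = ((Y.card - 2).factorial : ℤ) := by
  have hb' : b ∈ Y.erase a := Finset.mem_erase.mpr ⟨Ne.symm hab, hb⟩
  have h1 : Nblk Y a b
      = cnt Y (fun L => IsStrictLinearOrderOn Y L ∧ firstSecond Y a b L) :=
    Finset.sum_congr rfl (fun L _ => ite_inst _ _ 1 0)
  rw [h1]
  rw [cnt_congr (Q' := fun L => topIn Y a L ∧
      (fun L' => topIn (Y.erase a) b L') (restrictRel (Y.erase a) L)) ?_]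
  · rw [cnt_top Y a ha]
    rw [cnt_congr (Q' := fun L => topIn (Y.erase a) b L ∧
        (fun _ => True) (restrictRel ((Y.erase a).erase b) L)) (by intro L _; simp)]
    rw [cnt_top (Y.erase a) b hb' (fun _ => True)]
    rw [cnt_true ((Y.erase a).card - 1) _ (Finset.card_erase_of_mem hb')]
    rw [Finset.card_erase_of_mem ha]
    congr 2
  · intro L hslo
    constructor
    · rintro ⟨_, hfs⟩
      refine ⟨hfs.1, ?_⟩
      intro z hz hzb
      have hzY := Finset.mem_of_mem_erase hz
      have hza := (Finset.mem_erase.mp hz).1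
      exact ⟨hfs.2 z hzY hza hzb, hb', hz⟩
    · rintro ⟨h1, h2⟩
      refine ⟨hslo, h1, ?_⟩
      intro z hzY hza hzb
      exact (h2 z (Finset.mem_erase.mpr ⟨hza, hzY⟩) hzb).1

end Aux18c
section Aux18d
variable {C : Type}

theorem blockD {Y : Finset C} {a b x y : C} (ha : a ∈ Y) (hb : b ∈ Y) (hab : a ≠ b)
    (hx : x ∈ Y) (hy : y ∈ Y) (hxy : x ≠ y) :
    (half Y (blockCount Y a b) x y - half Y (blockCount Y a b) y x)
      - (half Y (blockCount Y b a) x y - half Y (blockCount Y b a) y x)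
    = if a = x ∧ b = y then psi Y else if a = y ∧ b = x then - psi Y else 0 := by
  have hpsi : psi Y = ((Y.card - 2).factorial : ℤ) + ((Y.card - 2).factorial : ℤ) := by
    unfold psi; ring
  by_cases h1 : a = x
  · by_cases h2 : b = y
    · subst h1; subst h2
      rw [if_pos ⟨rfl, rfl⟩]
      rw [half_block_top hb (Ne.symm hab), half_block_top' hb (Ne.symm hab),
        half_block_top' (a := b) (b := a) ha hab, half_block_top (a := b) (b := a) ha hab,
        Nblk_eq ha hb hab, Nblk_eq hb ha (Ne.symm hab), hpsi]
      ring
    · -- a = x, b ≠ y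
      subst h1
      have hya : y ≠ a := Ne.symm hxy
      have hyb : y ≠ b := fun h => h2 h.symm
      rw [if_neg (fun h => h2 h.2), if_neg (fun h => hxy h.1)]
      rw [half_block_top hy hya, half_block_top' hy hya,
        half_block_snd (a := b) (b := a) hy hyb hya,
        half_block_snd' (a := b) (b := a) hy hyb hya,
        Nblk_eq ha hb hab, Nblk_eq hb ha (Ne.symm hab)]
      ring
  · by_cases h1' : a = y
    · by_cases h2 : b = x
      · subst h1'; subst h2
        rw [if_neg (fun h => hab h.1), if_pos ⟨rfl, rfl⟩]
        rw [half_block_top' hb (Ne.symm hab), half_block_top hb (Ne.symm hab),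
          half_block_top (a := b) (b := a) ha hab, half_block_top' (a := b) (b := a) ha hab,
          Nblk_eq ha hb hab, Nblk_eq hb ha (Ne.symm hab), hpsi]
        ring
      · -- a = y, b ∉ {x, y}
        subst h1'
        have hxa : x ≠ a := hxy
        have hxb : x ≠ b := fun h => h2 h.symm
        rw [if_neg (fun h => h1 h.1), if_neg (fun h => h2 h.2)]
        rw [half_block_top' hx hxa, half_block_top hx hxa,
          half_block_snd' (a := b) (b := a) hx hxb hxa,
          half_block_snd (a := b) (b := a) hx hxb hxa,
          Nblk_eq ha hb hab, Nblk_eq hb ha (Ne.symm hab)]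
        ring
    · by_cases h2 : b = x
      · -- b = x, a ∉ {x, y}
        subst h2
        have hya : y ≠ a := fun h => h1' h.symm
        have hyb : y ≠ b := fun h => hxy h.symm
        rw [if_neg (fun h => hab h.1), if_neg (fun h => h1' h.1)]
        rw [half_block_snd hy hya hyb, half_block_snd' hy hya hyb,
          half_block_top (a := b) (b := a) hy hyb,
          half_block_top' (a := b) (b := a) hy hyb,
          Nblk_eq ha hb hab, Nblk_eq hb ha (Ne.symm hab)]
        ring
      · by_cases h3 : b = y
        · -- b = y, a ∉ {x, y}
          subst h3
          have hxa : x ≠ a := fun h => h1 h.symm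
          have hxb : x ≠ b := hxy
          rw [if_neg (fun h => h1 h.1), if_neg (fun h => hab h.1)]
          rw [half_block_snd' hx hxa hxb, half_block_snd hx hxa hxb,
            half_block_top' (a := b) (b := a) hx hxb,
            half_block_top (a := b) (b := a) hx hxb,
            Nblk_eq ha hb hab, Nblk_eq hb ha (Ne.symm hab)]
          ring
        · -- {a, b} ∩ {x, y} = ∅
          have hxa : x ≠ a := fun h => h1 h.symm
          have hxb : x ≠ b := fun h => h2 h.symm
          have hya : y ≠ a := fun h => h1' h.symm
          have hyb : y ≠ b := fun h => h3 h.symm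
          rw [if_neg (fun h => h1 h.1), if_neg (fun h => h1' h.1)]
          rw [half_block_far ha hb hab hxa hxb hya hyb,
            half_block_far ha hb hab hya hyb hxa hxb]
          ring

end Aux18d
section Aux18e
variable {C : Type}

theorem half_bigL (Y : Finset C) (T : WeakTournament C) (v w : C) :
    half Y (bigLCount Y T) v w = half Y (allOrdersCount Y) v w +
      ∑ p ∈ T.verts ×ˢ T.verts, (if T.edge p.1 p.2 then
        half Y (blockCount Y p.1 p.2) v w - half Y (blockCount Y p.2 p.1) v w else 0) := by
  unfold bigLCount
  rw [half_add, half_sum]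
  congr 1
  apply Finset.sum_congr rfl
  intro p _
  by_cases h : T.edge p.1 p.2
  · rw [show (fun L => if T.edge p.1 p.2 then
        blockCount Y p.1 p.2 L - blockCount Y p.2 p.1 L else 0)
      = fun L => blockCount Y p.1 p.2 L - blockCount Y p.2 p.1 L from
        funext fun L => if_pos h]
    rw [halfW_sub, if_pos h]
  · rw [show (fun L => if T.edge p.1 p.2 then
        blockCount Y p.1 p.2 L - blockCount Y p.2 p.1 L else 0)
      = fun _ => (0 : ℤ) from funext fun L => if_neg h]
    rw [if_neg h]
    simp [half]

theorem margin_bigL {Y : Finset C} (T : WeakTournament C) (hsub : T.verts ⊆ Y)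
    {x y : C} (hx : x ∈ T.verts) (hy : y ∈ T.verts) (hxy : x ≠ y) :
    (bigL Y T hsub).margin x y =
      (if T.edge x y then psi Y else 0) - (if T.edge y x then psi Y else 0) := by
  rw [margin_half]
  show half Y (bigLCount Y T) x y - half Y (bigLCount Y T) y x = _
  rw [half_bigL, half_bigL, half_all_symm (hsub hx) (hsub hy)]
  have hstep : ∀ p ∈ T.verts ×ˢ T.verts,
      ((if T.edge p.1 p.2 then
        half Y (blockCount Y p.1 p.2) x y - half Y (blockCount Y p.2 p.1) x y else 0)
      - (if T.edge p.1 p.2 then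
        half Y (blockCount Y p.1 p.2) y x - half Y (blockCount Y p.2 p.1) y x else 0))
      = (if (x, y) = p then (if T.edge x y then psi Y else 0) else 0)
        + (if (y, x) = p then -(if T.edge y x then psi Y else 0) else 0) := by
    intro p hp
    obtain ⟨hp1, hp2⟩ := Finset.mem_product.mp hp
    by_cases he : T.edge p.1 p.2
    · rw [if_pos he, if_pos he]
      have hne : p.1 ≠ p.2 := fun h => T.edge_asymm _ _ he (h ▸ he)
      have hD := blockD (hsub hp1) (hsub hp2) hne (hsub hx) (hsub hy) hxy
      rw [show (half Y (blockCount Y p.1 p.2) x y - half Y (blockCount Y p.2 p.1) x y)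
          - (half Y (blockCount Y p.1 p.2) y x - half Y (blockCount Y p.2 p.1) y x)
        = (half Y (blockCount Y p.1 p.2) x y - half Y (blockCount Y p.1 p.2) y x)
          - (half Y (blockCount Y p.2 p.1) x y - half Y (blockCount Y p.2 p.1) y x)
        from by ring, hD]
      by_cases hA : p.1 = x ∧ p.2 = y
      · have hpxy : (x, y) = p := by
          rw [Prod.ext_iff]; exact ⟨hA.1.symm, hA.2.symm⟩
        have hpyx : (y, x) ≠ p := by
          intro h
          rw [Prod.ext_iff] at h
          exact hxy (h.1.trans hA.1).symm
        have he' : T.edge x y := by rwa [hA.1, hA.2] at he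
        rw [if_pos ⟨hA.1, hA.2⟩, if_pos hpxy, if_neg hpyx, if_pos he']
        ring
      · by_cases hB : p.1 = y ∧ p.2 = x
        · have hpyx : (y, x) = p := by
            rw [Prod.ext_iff]; exact ⟨hB.1.symm, hB.2.symm⟩
          have hpxy : (x, y) ≠ p := by
            intro h
            rw [Prod.ext_iff] at h
            exact hxy (h.1.trans hB.1)
          have he' : T.edge y x := by rwa [hB.1, hB.2] at he
          rw [if_neg (fun h => hA ⟨h.1, h.2⟩), if_pos ⟨hB.1, hB.2⟩, if_neg hpxy,
            if_pos hpyx, if_pos he']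
          ring
        · have hpxy : (x, y) ≠ p := by
            intro h
            rw [Prod.ext_iff] at h
            exact hA ⟨h.1.symm, h.2.symm⟩
          have hpyx : (y, x) ≠ p := by
            intro h
            rw [Prod.ext_iff] at h
            exact hB ⟨h.1.symm, h.2.symm⟩
          rw [if_neg (fun h => hA ⟨h.1, h.2⟩), if_neg (fun h => hB ⟨h.1, h.2⟩),
            if_neg hpxy, if_neg hpyx]
          ring
    · rw [if_neg he, if_neg he]
      have hpxy : (if (x, y) = p then (if T.edge x y then psi Y else 0) else 0) = 0 := by
        by_cases h : (x, y) = p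
        · rw [if_pos h, if_neg (by rw [← h] at he; exact he)]
        · rw [if_neg h]
      have hpyx : (if (y, x) = p then -(if T.edge y x then psi Y else 0) else 0) = 0 := by
        by_cases h : (y, x) = p
        · rw [if_pos h, if_neg (by rw [← h] at he; exact he)]
          ring
        · rw [if_neg h]
      rw [hpxy, hpyx]
      ring
  rw [add_sub_add_comm, sub_self, zero_add, ← Finset.sum_sub_distrib,
    Finset.sum_congr rfl hstep, Finset.sum_add_distrib,
    Finset.sum_ite_eq _ (x, y) _, Finset.sum_ite_eq _ (y, x) _,
    if_pos (Finset.mem_product.mpr ⟨hx, hy⟩), if_pos (Finset.mem_product.mpr ⟨hy, hx⟩)]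
  ring

end Aux18e
section Aux18f
variable {C : Type}

theorem half_bigLW (Y : Finset C) (m : ℕ) (T : WeightedWeakTournament C) (v w : C) :
    half Y (bigLWCount Y m T) v w = (m : ℤ) * half Y (allOrdersCount Y) v w +
      ∑ p ∈ T.verts ×ˢ T.verts, (if T.edge p.1 p.2 then
        (T.wt p.1 p.2 / psi Y) *
          (half Y (blockCount Y p.1 p.2) v w - half Y (blockCount Y p.2 p.1) v w)
      else 0) := by
  unfold bigLWCount
  rw [half_add, half_sum, half_smul]
  congr 1
  apply Finset.sum_congr rfl
  intro p _
  by_cases h : T.edge p.1 p.2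
  · rw [show (fun L => if T.edge p.1 p.2 then (T.wt p.1 p.2 / psi Y) *
        (blockCount Y p.1 p.2 L - blockCount Y p.2 p.1 L) else 0)
      = fun L => (T.wt p.1 p.2 / psi Y) *
        ((fun L' => blockCount Y p.1 p.2 L' - blockCount Y p.2 p.1 L') L) from
        funext fun L => if_pos h]
    rw [half_smul, halfW_sub, if_pos h]
  · rw [show (fun L => if T.edge p.1 p.2 then (T.wt p.1 p.2 / psi Y) *
        (blockCount Y p.1 p.2 L - blockCount Y p.2 p.1 L) else 0)
      = fun _ => (0 : ℤ) from funext fun L => if_neg h]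
    rw [if_neg h]
    simp [half]

theorem margin_bigLW {Y : Finset C} (m : ℕ) (T : WeightedWeakTournament C)
    (hsub : T.verts ⊆ Y) {x y : C} (hx : x ∈ T.verts) (hy : y ∈ T.verts) (hxy : x ≠ y) :
    (bigLW Y m T hsub).margin x y =
      (if T.edge x y then (T.wt x y / psi Y) * psi Y else 0)
        - (if T.edge y x then (T.wt y x / psi Y) * psi Y else 0) := by
  rw [margin_half]
  show half Y (bigLWCount Y m T) x y - half Y (bigLWCount Y m T) y x = _
  rw [half_bigLW, half_bigLW, half_all_symm (hsub hx) (hsub hy)]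
  have hstep : ∀ p ∈ T.verts ×ˢ T.verts,
      ((if T.edge p.1 p.2 then (T.wt p.1 p.2 / psi Y) *
        (half Y (blockCount Y p.1 p.2) x y - half Y (blockCount Y p.2 p.1) x y) else 0)
      - (if T.edge p.1 p.2 then (T.wt p.1 p.2 / psi Y) *
        (half Y (blockCount Y p.1 p.2) y x - half Y (blockCount Y p.2 p.1) y x) else 0))
      = (if (x, y) = p then (if T.edge x y then (T.wt x y / psi Y) * psi Y else 0) else 0)
        + (if (y, x) = p then
            -(if T.edge y x then (T.wt y x / psi Y) * psi Y else 0) else 0) := by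
    intro p hp
    obtain ⟨hp1, hp2⟩ := Finset.mem_product.mp hp
    by_cases he : T.edge p.1 p.2
    · rw [if_pos he, if_pos he]
      have hne : p.1 ≠ p.2 := fun h => T.edge_asymm _ _ he (h ▸ he)
      have hD := blockD (hsub hp1) (hsub hp2) hne (hsub hx) (hsub hy) hxy
      rw [show (T.wt p.1 p.2 / psi Y) *
          (half Y (blockCount Y p.1 p.2) x y - half Y (blockCount Y p.2 p.1) x y)
          - (T.wt p.1 p.2 / psi Y) *
          (half Y (blockCount Y p.1 p.2) y x - half Y (blockCount Y p.2 p.1) y x)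
        = (T.wt p.1 p.2 / psi Y) *
          ((half Y (blockCount Y p.1 p.2) x y - half Y (blockCount Y p.1 p.2) y x)
          - (half Y (blockCount Y p.2 p.1) x y - half Y (blockCount Y p.2 p.1) y x))
        from by ring, hD]
      by_cases hA : p.1 = x ∧ p.2 = y
      · have hpxy : (x, y) = p := by
          rw [Prod.ext_iff]; exact ⟨hA.1.symm, hA.2.symm⟩
        have hpyx : (y, x) ≠ p := by
          intro h
          rw [Prod.ext_iff] at h
          exact hxy (h.1.trans hA.1).symm
        have he' : T.edge x y := by rwa [hA.1, hA.2] at he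
        rw [if_pos ⟨hA.1, hA.2⟩, if_pos hpxy, if_neg hpyx, if_pos he', hA.1, hA.2]
        ring
      · by_cases hB : p.1 = y ∧ p.2 = x
        · have hpyx : (y, x) = p := by
            rw [Prod.ext_iff]; exact ⟨hB.1.symm, hB.2.symm⟩
          have hpxy : (x, y) ≠ p := by
            intro h
            rw [Prod.ext_iff] at h
            exact hxy (h.1.trans hB.1)
          have he' : T.edge y x := by rwa [hB.1, hB.2] at he
          rw [if_neg (fun h => hA ⟨h.1, h.2⟩), if_pos ⟨hB.1, hB.2⟩, if_neg hpxy,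
            if_pos hpyx, if_pos he', hB.1, hB.2]
          ring
        · have hpxy : (x, y) ≠ p := by
            intro h
            rw [Prod.ext_iff] at h
            exact hA ⟨h.1.symm, h.2.symm⟩
          have hpyx : (y, x) ≠ p := by
            intro h
            rw [Prod.ext_iff] at h
            exact hB ⟨h.1.symm, h.2.symm⟩
          rw [if_neg (fun h => hA ⟨h.1, h.2⟩), if_neg (fun h => hB ⟨h.1, h.2⟩),
            if_neg hpxy, if_neg hpyx]
          ring
    · rw [if_neg he, if_neg he]
      have hpxy : (if (x, y) = p then
          (if T.edge x y then (T.wt x y / psi Y) * psi Y else 0) else 0) = 0 := by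
        by_cases h : (x, y) = p
        · rw [if_pos h, if_neg (by rw [← h] at he; exact he)]
        · rw [if_neg h]
      have hpyx : (if (y, x) = p then
          -(if T.edge y x then (T.wt y x / psi Y) * psi Y else 0) else 0) = 0 := by
        by_cases h : (y, x) = p
        · rw [if_pos h, if_neg (by rw [← h] at he; exact he)]
          ring
        · rw [if_neg h]
      rw [hpxy, hpyx]
      ring
  rw [add_sub_add_comm, sub_self, zero_add, ← Finset.sum_sub_distrib,
    Finset.sum_congr rfl hstep, Finset.sum_add_distrib,
    Finset.sum_ite_eq _ (x, y) _, Finset.sum_ite_eq _ (y, x) _,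
    if_pos (Finset.mem_product.mpr ⟨hx, hy⟩), if_pos (Finset.mem_product.mpr ⟨hy, hx⟩)]
  ring

end Aux18f
section Aux18g
variable {C : Type}

theorem margin_restrict (P : GAProfile C) {Z : Finset C} (hZ : Z.Nonempty)
    (hsub : Z ⊆ P.cands) {x y : C} (hx : x ∈ Z) (hy : y ∈ Z) :
    (P.restrict Z hZ hsub).margin x y = P.margin x y := by
  rw [margin_half, margin_half]
  have key : ∀ v w : C, v ∈ Z → w ∈ Z →
      half Z (P.restrict Z hZ hsub).count v w = half P.cands P.count v w := by
    intro v w hv hw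
    show (∑ L ∈ SY Z, if L v w then
        (∑ᶠ L', if restrictRel Z L' = L then P.count L' else 0) else 0) = _
    have hin : ∀ L : C → C → Prop,
        (∑ᶠ L', if restrictRel Z L' = L then P.count L' else 0)
        = ∑ L' ∈ SY P.cands, if restrictRel Z L' = L then P.count L' else 0 := by
      intro L
      apply finsum_eq_sum_of_support_subset
      intro L' hL'
      simp only [Function.mem_support] at hL'
      have hc : P.count L' ≠ 0 := by intro h0; apply hL'; simp [h0]
      exact Finset.mem_coe.mpr (mem_SY.mpr (P.count_supp L' hc))
    have h1 : ∀ L ∈ SY Z, (if L v w then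
        (∑ᶠ L', if restrictRel Z L' = L then P.count L' else 0) else 0)
        = ∑ L' ∈ SY P.cands, if restrictRel Z L' = L then
            (if L v w then P.count L' else 0) else 0 := by
      intro L _
      by_cases hL : L v w
      · rw [if_pos hL, hin]
        apply Finset.sum_congr rfl
        intro L' _
        rw [if_pos hL]
      · rw [if_neg hL]
        symm
        apply Finset.sum_eq_zero
        intro L' _
        rw [if_neg hL]
        simp
    rw [Finset.sum_congr rfl h1, Finset.sum_comm]
    apply Finset.sum_congr rfl
    intro L' hL'
    have hslo := mem_SY.mp hL'
    have hres : restrictRel Z L' ∈ SY Z := mem_SY.mpr (hslo.restrict hsub)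
    rw [Finset.sum_ite_eq (SY Z) (restrictRel Z L')
      (fun L => if L v w then P.count L' else 0), if_pos hres]
    apply if_congr _ rfl rfl
    exact ⟨fun h => h.1, fun h => ⟨h, hv, hw⟩⟩
  show half Z (P.restrict Z hZ hsub).count x y - half Z (P.restrict Z hZ hsub).count y x = _
  rw [key x y hx hy, key y x hy hx]

end Aux18g
section Aux18h
variable {C : Type}

theorem WT_ext {T1 T2 : WeakTournament C} (hv : T1.verts = T2.verts)
    (he : T1.edge = T2.edge) : T1 = T2 := by
  cases T1; cases T2
  dsimp at hv he
  subst hv; subst he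
  rfl

theorem WWT_ext {T1 T2 : WeightedWeakTournament C} (hv : T1.verts = T2.verts)
    (he : T1.edge = T2.edge) (hw : T1.wt = T2.wt) : T1 = T2 := by
  cases T1; cases T2
  dsimp at hv he hw
  subst hv; subst he; subst hw
  rfl

theorem margin_profileRep {Y : Finset C} (T : WeakTournament C) (hsub : T.verts ⊆ Y)
    {x y : C} (hx : x ∈ T.verts) (hy : y ∈ T.verts) (hxy : x ≠ y) :
    (profileRep Y T hsub).margin x y =
      (if T.edge x y then psi Y else 0) - (if T.edge y x then psi Y else 0) := by
  unfold profileRep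
  exact (margin_restrict _ _ _ hx hy).trans (margin_bigL T hsub hx hy hxy)

theorem maj_profileRep (Y : Finset C) (T : WeakTournament C) (hsub : T.verts ⊆ Y) :
    (profileRep Y T hsub).maj = T := by
  refine WT_ext rfl ?_
  funext u v
  apply propext
  show 0 < (profileRep Y T hsub).margin u v ∧
      u ∈ (profileRep Y T hsub).cands ∧ v ∈ (profileRep Y T hsub).cands ↔ T.edge u v
  constructor
  · rintro ⟨hm, hu, hv⟩
    have hu' : u ∈ T.verts := hu
    have hv' : v ∈ T.verts := hv
    have huv : u ≠ v := by
      rintro rfl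
      rw [margin_self] at hm
      omega
    rw [margin_profileRep T hsub hu' hv' huv] at hm
    by_cases he : T.edge u v
    · exact he
    · exfalso
      rw [if_neg he] at hm
      have hp := psi_pos Y
      by_cases he' : T.edge v u
      · rw [if_pos he'] at hm; omega
      · rw [if_neg he'] at hm; omega
  · intro he
    have hu : u ∈ T.verts := (T.edge_dom u v he).1
    have hv : v ∈ T.verts := (T.edge_dom u v he).2
    have huv : u ≠ v := fun h => T.edge_asymm u v he (h ▸ he)
    refine ⟨?_, hu, hv⟩
    rw [margin_profileRep T hsub hu hv huv, if_pos he, if_neg (T.edge_asymm u v he)]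
    have hp := psi_pos Y
    omega

theorem margin_repW (Y : Finset C) (m : ℕ) (P : GAProfile C)
    (hsub : (WeightedWeakTournament.scale (psi Y) (psi_pos Y) P.marg).verts ⊆ Y)
    {x y : C} (hx : x ∈ P.cands) (hy : y ∈ P.cands) :
    (profileRepW Y m (WeightedWeakTournament.scale (psi Y) (psi_pos Y) P.marg)
      hsub).margin x y = psi Y * P.margin x y := by
  set T := WeightedWeakTournament.scale (psi Y) (psi_pos Y) P.marg with hT
  rcases eq_or_ne x y with rfl | hxy
  · rw [margin_self, margin_self, mul_zero]
  have hx' : x ∈ T.verts := hx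
  have hy' : y ∈ T.verts := hy
  unfold profileRepW
  refine (margin_restrict _ _ _ hx' hy').trans ((margin_bigLW m T hsub hx' hy' hxy).trans ?_)
  have hq : ∀ u v : C, T.edge u v → (T.wt u v / psi Y) * psi Y = psi Y * P.margin u v := by
    intro u v he
    have hwt : T.wt u v = psi Y * P.margin u v := by
      show psi Y * P.marg.wt u v = psi Y * P.margin u v
      congr 1
      exact if_pos he
    rw [hwt, Int.mul_ediv_cancel_left _ (ne_of_gt (psi_pos Y))]
    ring
  have hasym : ∀ u v : C, T.edge u v → ¬ T.edge v u := T.edge_asymm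
  by_cases he : T.edge x y
  · rw [if_pos he, if_neg (hasym x y he), hq x y he]
    ring
  · rw [if_neg he]
    by_cases he' : T.edge y x
    · rw [if_pos he', hq y x he', P.margin_neg y x]
      ring
    · rw [if_neg he']
      have h1 : ¬ (0 < P.margin x y) := fun h => he ⟨h, hx, hy⟩
      have h2 : ¬ (0 < P.margin y x) := fun h => he' ⟨h, hy, hx⟩
      have h3 := P.margin_neg y x
      have : P.margin x y = 0 := by omega
      rw [this]
      ring

theorem marg_profileRepW (Y : Finset C) (m : ℕ) (P : GAProfile C)
    (hsub : (WeightedWeakTournament.scale (psi Y) (psi_pos Y) P.marg).verts ⊆ Y) :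
    (profileRepW Y m (WeightedWeakTournament.scale (psi Y) (psi_pos Y) P.marg)
      hsub).marg = WeightedWeakTournament.scale (psi Y) (psi_pos Y) P.marg := by
  set R := profileRepW Y m (WeightedWeakTournament.scale (psi Y) (psi_pos Y) P.marg) hsub
    with hR
  have hp := psi_pos Y
  refine WWT_ext rfl ?_ ?_
  · funext u v
    apply propext
    show 0 < R.margin u v ∧ u ∈ R.cands ∧ v ∈ R.cands ↔
      0 < P.margin u v ∧ u ∈ P.cands ∧ v ∈ P.cands
    constructor
    · rintro ⟨hm, hu, hv⟩
      have hu' : u ∈ P.cands := hu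
      have hv' : v ∈ P.cands := hv
      refine ⟨?_, hu', hv'⟩
      rw [hR, margin_repW Y m P hsub hu' hv'] at hm
      nlinarith
    · rintro ⟨hm, hu, hv⟩
      refine ⟨?_, hu, hv⟩
      rw [hR, margin_repW Y m P hsub hu hv]
      exact mul_pos hp hm
  · funext u v
    show (if 0 < R.margin u v ∧ u ∈ R.cands ∧ v ∈ R.cands then R.margin u v else 0)
      = psi Y * (if 0 < P.margin u v ∧ u ∈ P.cands ∧ v ∈ P.cands then P.margin u v else 0)
    by_cases hmem : u ∈ P.cands ∧ v ∈ P.cands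
    · have hmargin : R.margin u v = psi Y * P.margin u v :=
        margin_repW Y m P hsub hmem.1 hmem.2
      by_cases hpos : 0 < P.margin u v
      · rw [if_pos ⟨by rw [hmargin]; exact mul_pos hp hpos, hmem.1, hmem.2⟩,
          if_pos ⟨hpos, hmem.1, hmem.2⟩, hmargin]
      · rw [if_neg, if_neg, mul_zero]
        · exact fun h => hpos h.1
        · intro h
          apply hpos
          have := h.1
          rw [hmargin] at this
          nlinarith
    · rw [if_neg (fun h => hmem ⟨h.2.1, h.2.2⟩), if_neg (fun h => hmem ⟨h.2.1, h.2.2⟩),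
        mul_zero]

end Aux18h
/-- Let `F` be an anonymous voting method. For any majoritarian
(resp. homogeneously pairwise) universal axiom `Ax`: if `F` satisfies `Ax`, then the
majoritarian projection `F_{maj,Y}` (resp. the pairwise projection `F_{pair,Y,m}`)
satisfies `Ax`, for any finite `Y ⊆ 𝒳` and `m ∈ ℤ⁺`. -/
theorem projections_preserve_axioms (C : Type) [Infinite C] (F : AnonVotingMethod C)
    (n : ℕ) (Ax : Set (Fin n → GAProfile C × Finset C))
    (hAx : ∀ f ∈ Ax, ∀ i, (f i).2 ⊆ (f i).1.cands)
    (Y : Finset C) (m : ℕ) (hm : 0 < m) :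
    (IsMajoritarianAx Ax → F.Satisfies Ax → (majProj F Y).Satisfies Ax) ∧
    (IsHomogeneouslyPairwiseAx Ax → F.Satisfies Ax → (pairProj F Y m).Satisfies Ax) := by
  constructor
  · intro hMaj hSat f hf
    have hdom : ∀ i, (f i).1 ∈ (majProj F Y).dom := fun i => (hf i).1
    choose hsub hFdom using fun i => (hdom i).2
    set Qv : Fin n → GAProfile C :=
      fun i => profileRep Y ((f i).1).maj (hsub i) with hQv
    have hwin : ∀ i, (f i).2 = F.winners (Qv i) := by
      intro i
      rw [(hf i).2]
      show (if h : ((f i).1).maj.verts ⊆ Y then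
        F.winners (profileRep Y ((f i).1).maj h) else ((f i).1).cands) = _
      rw [dif_pos (hsub i)]
    have hAxQ : (fun i => (Qv i, F.winners (Qv i))) ∈ Ax :=
      hSat _ (fun i => ⟨hFdom i, rfl⟩)
    have hXsub : ∀ i, F.winners (Qv i) ⊆ ((f i).1).cands := by
      intro i
      exact F.winners_sub (Qv i) (hFdom i)
    have hiff := hMaj (fun i => (f i).1) Qv
      (fun i => (maj_profileRep Y ((f i).1).maj (hsub i)).symm)
      (fun i => F.winners (Qv i)) hXsub
    have hmem : (fun i => ((f i).1, F.winners (Qv i))) ∈ Ax := hiff.mpr hAxQ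
    have hfe : f = fun i => ((f i).1, F.winners (Qv i)) := by
      funext i
      exact Prod.ext rfl (hwin i)
    rw [hfe]
    exact hmem
  · intro hHom hSat f hf
    have hdom : ∀ i, (f i).1 ∈ (pairProj F Y m).dom := fun i => (hf i).1
    choose hsub hFdom using fun i => (hdom i).2.2
    set Qv : Fin n → GAProfile C := fun i =>
      profileRepW Y m
        (WeightedWeakTournament.scale (psi Y) (psi_pos Y) ((f i).1).marg) (hsub i)
      with hQv
    have hwin : ∀ i, (f i).2 = F.winners (Qv i) := by
      intro i
      rw [(hf i).2]
      show (if h : (WeightedWeakTournament.scale (psi Y) (psi_pos Y)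
            ((f i).1).marg).verts ⊆ Y then
          F.winners (profileRepW Y m
            (WeightedWeakTournament.scale (psi Y) (psi_pos Y) ((f i).1).marg) h)
        else ((f i).1).cands) = _
      rw [dif_pos (hsub i)]
    have hAxQ : (fun i => (Qv i, F.winners (Qv i))) ∈ Ax :=
      hSat _ (fun i => ⟨hFdom i, rfl⟩)
    have hXsub : ∀ i, F.winners (Qv i) ⊆ ((f i).1).cands := by
      intro i
      exact F.winners_sub (Qv i) (hFdom i)
    have hiff := hHom (fun i => (f i).1) Qv (psi Y) (psi_pos Y)
      (fun i => (marg_profileRepW Y m ((f i).1) (hsub i)).symm)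
      (fun i => F.winners (Qv i)) hXsub
    have hmem : (fun i => ((f i).1, F.winners (Qv i))) ∈ Ax := hiff.mpr hAxQ
    have hfe : f = fun i => ((f i).1, F.winners (Qv i)) := by
      funext i
      exact Prod.ext rfl (hwin i)
    rw [hfe]
    exact hmem
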